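/- Let X be a real normed space, ω an increasing modulus of continuity with lim_{t→∞} ω(t) = ∞, E ⊆ X, (f,G) : E → ℝ × X* a 1-jet, and M > 0. If for all y, z ∈ E: f(y) ≥ f(z) + G(z)(y−z) + M·(φ_ω)*( ‖G(y)−G(z)‖_* / M ), then for all y, z ∈ E and x ∈ X: f(y) + G(y)(x−y) + M·φ_ω(‖x−y‖) ≥ f(z) + G(z)(x−z). -/

import Mathlib

open Set

theorem stmt_5 {X : Type*} [NormedAddCommGroup X] [NormedSpace ℝ X]
    (ω φ conj : ℝ → ℝ)
    (hnonneg : ∀ t ∈ Ici (0:ℝ), 0 ≤ ω t)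
    (hmono : StrictMonoOn ω (Ici (0:ℝ)))
    (hconc : ConcaveOn ℝ (Ici (0:ℝ)) ω)
    (h0 : ω 0 = 0)
    (h0' : Filter.Tendsto ω (nhdsWithin 0 (Ioi (0:ℝ))) (nhds 0))
    (hcoer : Filter.Tendsto ω Filter.atTop Filter.atTop)
    (hφ : ∀ t, φ t = ∫ s in (0:ℝ)..t, ω s)
    (hconj : ∀ t, conj t = sSup {y : ℝ | ∃ s : ℝ, 0 ≤ s ∧ y = t * s - φ s})
    (E : Set X) (f : X → ℝ) (G : X → X →L[ℝ] ℝ) (M : ℝ) (hM : 0 < M)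
    (hjet : ∀ y ∈ E, ∀ z ∈ E,
      f z + G z (y - z) + M * conj (‖G y - G z‖ / M) ≤ f y) :
    ∀ y ∈ E, ∀ z ∈ E, ∀ x : X,
      f z + G z (x - z) ≤ f y + G y (x - y) + M * φ ‖x - y‖ := by
  intro y hy z hz x
  have hMonoOn : MonotoneOn ω (Ici (0:ℝ)) := hmono.monotoneOn
  have hInt : ∀ a b : ℝ, 0 ≤ a → 0 ≤ b →
      IntervalIntegrable ω MeasureTheory.volume a b := by
    intro a b ha hb
    exact MonotoneOn.intervalIntegrable
      (hMonoOn.mono (Set.OrdConnected.uIcc_subset Set.ordConnected_Ici ha hb))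
  have hφnonneg : ∀ s : ℝ, 0 ≤ s → 0 ≤ φ s := by
    intro s hs
    rw [hφ]
    exact intervalIntegral.integral_nonneg hs (fun u hu => hnonneg u hu.1)
  -- lower bound for φ
  have hφlb : ∀ s₀ s : ℝ, 0 ≤ s₀ → s₀ ≤ s → ω s₀ * (s - s₀) ≤ φ s := by
    intro s₀ s hs₀ hs
    have hs' : (0:ℝ) ≤ s := le_trans hs₀ hs
    have hsplit : φ s₀ + ∫ u in s₀..s, ω u = φ s := by
      rw [hφ, hφ]
      exact intervalIntegral.integral_add_adjacent_intervals
        (hInt 0 s₀ le_rfl hs₀) (hInt s₀ s hs₀ hs')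
    have hconst : ∫ u in s₀..s, (fun _ => ω s₀) u = (s - s₀) * ω s₀ := by
      simp [intervalIntegral.integral_const, smul_eq_mul]
    have hmono' : ∫ u in s₀..s, (fun _ => ω s₀) u ≤ ∫ u in s₀..s, ω u := by
      apply intervalIntegral.integral_mono_on hs
        (intervalIntegrable_const) (hInt s₀ s hs₀ hs')
      intro u hu
      exact hMonoOn hs₀ (le_trans hs₀ hu.1) hu.1
    nlinarith [hφnonneg s₀ hs₀]
  -- Fenchel-Young
  set t : ℝ := ‖G y - G z‖ / M with ht
  have htnn : 0 ≤ t := div_nonneg (norm_nonneg _) hM.le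
  have hbdd : BddAbove {v : ℝ | ∃ s : ℝ, 0 ≤ s ∧ v = t * s - φ s} := by
    obtain ⟨s₀, hts₀, hs₀0⟩ := ((hcoer.eventually_gt_atTop t).and
      (Filter.eventually_ge_atTop 0)).exists
    refine ⟨t * s₀ + ω s₀ * s₀, ?_⟩
    rintro v ⟨s, hs, rfl⟩
    rcases le_total s s₀ with h | h
    · have h1 : φ s ≥ 0 := hφnonneg s hs
      have h2 : 0 ≤ ω s₀ := hnonneg s₀ hs₀0
      nlinarith
    · have h1 := hφlb s₀ s hs₀0 h
      have h2 : 0 ≤ ω s₀ := hnonneg s₀ hs₀0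
      nlinarith
  set r : ℝ := ‖x - y‖ with hr
  have hrnn : 0 ≤ r := norm_nonneg _
  have hFY : t * r - φ r ≤ conj t := by
    rw [hconj]
    exact le_csSup hbdd ⟨r, hrnn, rfl⟩
  -- from hFY: ‖G y - G z‖ * r ≤ M * conj t + M * φ r
  have hkey : ‖G y - G z‖ * r ≤ M * conj t + M * φ r := by
    have := mul_le_mul_of_nonneg_left hFY hM.le
    have ht' : M * t = ‖G y - G z‖ := by
      rw [ht]; field_simp [hM.ne']
    nlinarith
  have hj := hjet y hy z hz
  -- pairing bound
  have hpair : (G z) (x - y) - (G y) (x - y) ≤ ‖G y - G z‖ * r := by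
    have h1 : (G z - G y) (x - y) ≤ ‖(G z - G y) (x - y)‖ := le_abs_self _
    have h2 : ‖(G z - G y) (x - y)‖ ≤ ‖G z - G y‖ * ‖x - y‖ :=
      (G z - G y).le_opNorm _
    have h3 : ‖G z - G y‖ = ‖G y - G z‖ := norm_sub_rev _ _
    simp only [ContinuousLinearMap.sub_apply] at h1 h2
    rw [h3] at h2
    linarith
  have hsplit2 : (G z) (x - z) = (G z) (y - z) + (G z) (x - y) := by
    rw [← map_add]; congr 1; abel
  linarith
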